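/- A pair of maps (δ, ε) with δ: L^(2) → M and ε: L^(2) → 2^N is tree-like if and only if (1) δ is a symbolic ultrametric, (2) ε is a Fitch map, and (3) H(T_δ) ∪ H(T_ε) is a hierarchy on L, where T_δ and T_ε are the respective least-resolved trees. -/

import Mathlib

/-- A rooted phylogenetic tree with leaf set `L`: a finite vertex type `V`,
a root, a parent map (the root is its own parent), every vertex reaches the
root by iterating `parent`, the leaves are exactly the vertices without
children and are in bijection with `L`, and every inner vertex has at least
two children. -/
structure PhyloTree (L : Type) : Type 1 where
  V : Type
  fintypeV : Fintype V
  root : V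
  parent : V → V
  leaf : L → V
  parent_root : parent root = root
  reach : ∀ v : V, ∃ n : ℕ, parent^[n] v = root
  leaf_inj : Function.Injective leaf
  leaf_iff : ∀ v : V, (∀ u : V, parent u = v → u = v) ↔ ∃ x : L, leaf x = v
  phylo : ∀ v : V, (¬ ∃ x : L, leaf x = v) →
      ∃ u u' : V, u ≠ u' ∧ parent u = v ∧ parent u' = v ∧ u ≠ v ∧ u' ≠ v

namespace PhyloTree

variable {L : Type} (T : PhyloTree L)

/-- `v` is an ancestor (or equal) of `w`. -/
def anc (v w : T.V) : Prop := ∃ n : ℕ, T.parent^[n] w = v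

def isLeaf (v : T.V) : Prop := ∃ x : L, T.leaf x = v

/-- The cluster `L(T(v))`: the set of leaves below `v`. -/
def cluster (v : T.V) : Set L := {x : L | T.anc v (T.leaf x)}

/-- The cluster system `H(T)`. -/
def clusters : Set (Set L) := Set.range T.cluster

/-- `w` is the last common ancestor of the leaves `x` and `y`. -/
def isLCA (x y : L) (w : T.V) : Prop :=
  T.anc w (T.leaf x) ∧ T.anc w (T.leaf y) ∧
    ∀ u : T.V, T.anc u (T.leaf x) → T.anc u (T.leaf y) → T.anc u w

/-- `u` is a child of `v`. -/
def childOf (u v : T.V) : Prop := T.parent u = v ∧ u ≠ v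

/-- The edge `{parent u, u}` (encoded by its lower endpoint `u`) is an inner edge. -/
def innerEdge (u : T.V) : Prop := T.parent u ≠ u ∧ ¬ T.isLeaf u

/-- The edge `{parent u, u}` lies on the path from the vertex `w` down to the leaf `y`. -/
def onPath (w : T.V) (y : L) (u : T.V) : Prop :=
  T.anc w u ∧ u ≠ w ∧ T.anc u (T.leaf y)

/-- The vertex-labeled tree `(T,t)` explains `δ`. -/
def ExplainsDelta {M : Type} (t : T.V → M) (δ : L → L → M) : Prop :=
  ∀ x y : L, x ≠ y → ∀ w : T.V, T.isLCA x y w → t w = δ x y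

/-- The edge-labeled tree `(T,λ)` explains `ε`; edge labels are encoded on the
lower endpoint of each edge. -/
def ExplainsEps {N : Type} (lam : T.V → Finset N) (ε : L → L → Finset N) : Prop :=
  ∀ x y : L, x ≠ y → ∀ w : T.V, T.isLCA x y w →
    ∀ k : N, k ∈ ε x y ↔ ∃ u : T.V, T.onPath w y u ∧ k ∈ lam u

/-- The vertex labeling is discriminating: the endpoints of every inner edge
carry distinct labels. -/
def Discriminating {M : Type} (t : T.V → M) : Prop :=
  ∀ u : T.V, T.innerEdge u → t u ≠ t (T.parent u)

/-- Total number of labels over all edges, `Σ_{e ∈ E(T)} |λ(e)|`. -/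
noncomputable def labelSum {N : Type} (lam : T.V → Finset N) : ℕ :=
  letI := T.fintypeV
  letI := Classical.decEq T.V
  ∑ v : T.V, if T.parent v = v then 0 else (lam v).card

/-- Condition (C): every inner vertex has a child joined by an empty-labeled edge. -/
def CondC {N : Type} (lam : T.V → Finset N) : Prop :=
  ∀ v : T.V, ¬ T.isLeaf v → ∃ u : T.V, T.childOf u v ∧ lam u = ∅

/-- Condition (C1): if `t(v) ∈ M₀` then all edges from `v` to its children are empty. -/
def CondC1 {M N : Type} (t : T.V → M) (lam : T.V → Finset N) (M0 : Set M) : Prop :=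
  ∀ v u : T.V, T.childOf u v → t v ∈ M0 → lam u = ∅

/-- Condition (C2): at every vertex, at most one edge to a child is nonempty. -/
def CondC2 {N : Type} (lam : T.V → Finset N) : Prop :=
  ∀ v u u' : T.V, T.childOf u v → T.childOf u' v → lam u ≠ ∅ → lam u' ≠ ∅ → u = u'

/-- `(T1,λ1) ≤ (T2,λ2)`: the edge-labeled tree `(T2,λ2)` refines `(T1,λ1)`. -/
def LeLabeled {N : Type} (T1 : PhyloTree L) (lam1 : T1.V → Finset N)
    (T2 : PhyloTree L) (lam2 : T2.V → Finset N) : Prop :=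
  T1.clusters ⊆ T2.clusters ∧
    ∀ (v1 : T1.V) (v2 : T2.V), T1.parent v1 ≠ v1 → T2.parent v2 ≠ v2 →
      T1.cluster v1 = T2.cluster v2 → lam1 v1 ⊆ lam2 v2

/-- `φ` witnesses that `T'` is obtained from `T` by contracting the inner edge
`{parent u, u}`. -/
def IsContractionMap (T : PhyloTree L) (u : T.V) (T' : PhyloTree L)
    (φ : T.V → T'.V) : Prop :=
  T.innerEdge u ∧ Function.Surjective φ ∧ φ u = φ (T.parent u) ∧
    (∀ a b : T.V, φ a = φ b →
      a = b ∨ (a = u ∧ b = T.parent u) ∨ (b = u ∧ a = T.parent u)) ∧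
    (∀ v : T.V, v ≠ u → T'.parent (φ v) = φ (T.parent v)) ∧
    (∀ x : L, φ (T.leaf x) = T'.leaf x) ∧ φ T.root = T'.root

/-- `T'` is obtained from `T` by contracting the inner edge `{parent u, u}`. -/
def ContractEdge (T : PhyloTree L) (u : T.V) (T' : PhyloTree L) : Prop :=
  ∃ φ : T.V → T'.V, IsContractionMap T u T' φ

/-- Isomorphism of rooted trees on the same leaf set. -/
def Isomorphic (T1 T2 : PhyloTree L) : Prop :=
  ∃ φ : T1.V ≃ T2.V, (∀ v : T1.V, φ (T1.parent v) = T2.parent (φ v)) ∧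
    ∀ x : L, φ (T1.leaf x) = T2.leaf x

def IsSymbolicUltrametric {M : Type} (δ : L → L → M) : Prop :=
  ∃ (T : PhyloTree L) (t : T.V → M), T.ExplainsDelta t δ

def IsFitchMap {N : Type} (ε : L → L → Finset N) : Prop :=
  ∃ (T : PhyloTree L) (lam : T.V → Finset N), T.ExplainsEps lam ε

def TreeLike {M N : Type} (δ : L → L → M) (ε : L → L → Finset N) : Prop :=
  ∃ (T : PhyloTree L) (t : T.V → M) (lam : T.V → Finset N),
    T.ExplainsDelta t δ ∧ T.ExplainsEps lam ε

def MTreeLike {M N : Type} (δ : L → L → M) (ε : L → L → Finset N) (M0 : Set M) : Prop :=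
  ∃ (T : PhyloTree L) (t : T.V → M) (lam : T.V → Finset N),
    T.ExplainsDelta t δ ∧ T.ExplainsEps lam ε ∧ T.CondC lam ∧ T.CondC1 t lam M0

end PhyloTree

/-- A hierarchy on `L`. -/
def IsHierarchy {L : Type} (H : Set (Set L)) : Prop :=
  Set.univ ∈ H ∧ (∀ x : L, {x} ∈ H) ∧
    (∀ A ∈ H, ∀ B ∈ H, A ∩ B = A ∨ A ∩ B = B ∨ A ∩ B = (∅ : Set L)) ∧
    (∅ : Set L) ∉ H

/-! ### Auxiliary development -/

namespace PhyloTree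

section Basic

variable {L : Type} {T : PhyloTree L}

theorem anc_refl (v : T.V) : T.anc v v := ⟨0, rfl⟩

theorem anc_trans {a b c : T.V} (h1 : T.anc a b) (h2 : T.anc b c) : T.anc a c := by
  obtain ⟨n, hn⟩ := h1
  obtain ⟨m, hm⟩ := h2
  exact ⟨n + m, by rw [Function.iterate_add_apply, hm, hn]⟩

theorem parent_iterate_root (k : ℕ) : T.parent^[k] T.root = T.root := by
  induction k with
  | zero => rfl
  | succ n ih => rw [Function.iterate_succ_apply', ih, T.parent_root]

theorem root_anc (v : T.V) : T.anc T.root v := T.reach v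

theorem anc_root {v : T.V} (h : T.anc v T.root) : v = T.root := by
  obtain ⟨n, hn⟩ := h
  rw [parent_iterate_root] at hn
  exact hn.symm

theorem eq_root_of_loop {v : T.V} {k : ℕ} (hk : k ≠ 0) (h : T.parent^[k] v = v) :
    v = T.root := by
  obtain ⟨d, hd⟩ := T.reach v
  have hmul : ∀ t : ℕ, T.parent^[t * k] v = v := by
    intro t
    induction t with
    | zero => simp
    | succ s ih => rw [Nat.succ_mul, Function.iterate_add_apply, h, ih]
  have h1 : T.parent^[d * k] v = v := hmul d
  have hdk : d ≤ d * k := Nat.le_mul_of_pos_right d (Nat.pos_of_ne_zero hk)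
  have : T.parent^[d * k] v = T.parent^[d * k - d] (T.parent^[d] v) := by
    rw [← Function.iterate_add_apply]
    congr 1
    omega
  rw [this, hd, parent_iterate_root] at h1
  exact h1.symm

theorem anc_antisymm {v w : T.V} (h1 : T.anc v w) (h2 : T.anc w v) : v = w := by
  obtain ⟨n, hn⟩ := h1
  obtain ⟨m, hm⟩ := h2
  rcases Nat.eq_zero_or_pos (m + n) with h | h
  · have : m = 0 := by omega
    simpa [this] using hm
  · have hloop : T.parent^[m + n] w = w := by
      rw [Function.iterate_add_apply, hn, hm]
    have hw := eq_root_of_loop (by omega) hloop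
    have hloop2 : T.parent^[n + m] v = v := by
      rw [Function.iterate_add_apply, hm, hn]
    have hv := eq_root_of_loop (by omega) hloop2
    rw [hv, hw]

theorem anc_total {a b c : T.V} (h1 : T.anc a c) (h2 : T.anc b c) :
    T.anc a b ∨ T.anc b a := by
  obtain ⟨n, hn⟩ := h1
  obtain ⟨m, hm⟩ := h2
  rcases le_total n m with h | h
  · right
    exact ⟨m - n, by rw [← hn, ← Function.iterate_add_apply]; rw [← hm]; congr 1; omega⟩
  · left
    exact ⟨n - m, by rw [← hm, ← Function.iterate_add_apply]; rw [← hn]; congr 1; omega⟩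

theorem parent_eq_self_iff {v : T.V} : T.parent v = v ↔ v = T.root := by
  constructor
  · intro h
    exact eq_root_of_loop (k := 1) one_ne_zero (by simpa using h)
  · rintro rfl
    exact T.parent_root

theorem isLeaf_no_desc {v w : T.V} (hv : T.isLeaf v) (h : T.anc v w) : w = v := by
  obtain ⟨n, hn⟩ := h
  induction n generalizing w with
  | zero => exact hn
  | succ k ih =>
    rw [Function.iterate_succ_apply] at hn
    have := ih hn
    exact (T.leaf_iff v).2 hv w (by rw [this])

theorem anc_parent (v : T.V) : T.anc (T.parent v) v := ⟨1, rfl⟩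

/-- A proper descent yields a child on the way. -/
theorem exists_child_anc {v w : T.V} (h : T.anc v w) (hne : w ≠ v) :
    ∃ c : T.V, T.childOf c v ∧ T.anc c w := by
  classical
  have hex : ∃ n : ℕ, T.parent^[n] w = v := h
  let n0 := Nat.find hex
  have hn0 : T.parent^[n0] w = v := Nat.find_spec hex
  have hpos : n0 ≠ 0 := by
    intro h0
    apply hne
    simpa [h0] using hn0
  refine ⟨T.parent^[n0 - 1] w, ⟨?_, ?_⟩, ⟨n0 - 1, rfl⟩⟩
  · have h2 : T.parent^[n0 - 1 + 1] w = v := by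
      rw [(by omega : n0 - 1 + 1 = n0)]; exact hn0
    rw [Function.iterate_succ_apply'] at h2
    exact h2
  · intro hc
    exact Nat.find_min hex (show n0 - 1 < n0 by omega) hc

theorem child_eq_of_anc {u u' v : T.V} (h : T.childOf u v) (h' : T.childOf u' v)
    (ha : T.anc u u') : u = u' := by
  obtain ⟨n, hn⟩ := ha
  rcases Nat.eq_zero_or_pos n with h0 | h0
  · simpa [h0] using hn.symm
  · have : T.parent^[n] u' = T.parent^[n-1] (T.parent u') := by
      rw [← Function.iterate_succ_apply]; congr 1; omega
    rw [this, h'.1] at hn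
    -- u = parent^[n-1] v, so anc u v; also anc v u via parent u = v
    have h1 : T.anc u v := ⟨n - 1, hn⟩
    have h2 : T.anc v u := by rw [← h.1]; exact anc_parent u
    exact absurd (anc_antisymm h1 h2) h.2

theorem child_comparable_eq {u u' v : T.V} (h : T.childOf u v) (h' : T.childOf u' v)
    (hcomp : T.anc u u' ∨ T.anc u' u) : u = u' := by
  rcases hcomp with hc | hc
  · exact child_eq_of_anc h h' hc
  · exact (child_eq_of_anc h' h hc).symm

theorem mem_cluster {x : L} {v : T.V} : x ∈ T.cluster v ↔ T.anc v (T.leaf x) := Iff.rfl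

theorem cluster_mono {v w : T.V} (h : T.anc v w) : T.cluster w ⊆ T.cluster v :=
  fun _ hx => anc_trans h hx

theorem cluster_root : T.cluster T.root = Set.univ :=
  Set.eq_univ_of_forall fun x => root_anc (T.leaf x)

theorem cluster_leaf (x : L) : T.cluster (T.leaf x) = {x} := by
  ext y
  simp only [mem_cluster, Set.mem_singleton_iff]
  constructor
  · intro h
    exact T.leaf_inj (isLeaf_no_desc ⟨x, rfl⟩ h)
  · rintro rfl
    exact anc_refl _

theorem comparable_of_cluster_inter {v w : T.V} {x : L}
    (hv : x ∈ T.cluster v) (hw : x ∈ T.cluster w) : T.anc v w ∨ T.anc w v :=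
  anc_total hv hw

theorem cluster_nested_or_disjoint (v w : T.V) :
    T.cluster v ⊆ T.cluster w ∨ T.cluster w ⊆ T.cluster v ∨
      T.cluster v ∩ T.cluster w = ∅ := by
  by_cases h : T.cluster v ∩ T.cluster w = ∅
  · exact Or.inr (Or.inr h)
  · obtain ⟨x, hxv, hxw⟩ := Set.nonempty_iff_ne_empty.2 h
    rcases anc_total hxv hxw with hc | hc
    · exact Or.inr (Or.inl (cluster_mono hc))
    · exact Or.inl (cluster_mono hc)

/-- Every vertex has a leaf below it. -/
theorem exists_leaf_below (v : T.V) : ∃ x : L, x ∈ T.cluster v := by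
  classical
  letI := T.fintypeV
  -- strong induction on the number of descendants
  have key : ∀ n : ℕ, ∀ v : T.V, Set.ncard {w : T.V | T.anc v w} ≤ n →
      ∃ x : L, x ∈ T.cluster v := by
    intro n
    induction n with
    | zero =>
      intro v hv
      exfalso
      have : v ∈ {w : T.V | T.anc v w} := anc_refl v
      have hne : ({w : T.V | T.anc v w}).Nonempty := ⟨v, this⟩
      have := Set.ncard_pos (Set.toFinite _) |>.2 hne
      omega
    | succ n ih =>
      intro v hv
      by_cases hleaf : T.isLeaf v
      · obtain ⟨x, hx⟩ := hleaf
        exact ⟨x, by rw [mem_cluster, hx]; exact anc_refl _⟩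
      · obtain ⟨u, u', hne, hu, hu', huv, hu'v⟩ := T.phylo v hleaf
        have hsub : {w : T.V | T.anc u w} ⊆ {w : T.V | T.anc v w} := by
          intro w hw
          exact anc_trans (by rw [← hu]; exact anc_parent u) hw
        have hvnot : v ∉ {w : T.V | T.anc u w} := by
          intro hvv
          exact huv (anc_antisymm hvv (by rw [← hu]; exact anc_parent u))
        have hlt : Set.ncard {w : T.V | T.anc u w} < Set.ncard {w : T.V | T.anc v w} := by
          refine Set.ncard_lt_ncard ⟨hsub, fun hss => hvnot (hss (anc_refl v))⟩ (Set.toFinite _)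
        obtain ⟨x, hx⟩ := ih u (by omega)
        exact ⟨x, anc_trans (by rw [← hu]; exact anc_parent u) hx⟩
  exact key _ v le_rfl

theorem cluster_nonempty (v : T.V) : (T.cluster v).Nonempty := exists_leaf_below v

/-- lca existence. -/
theorem exists_isLCA (x y : L) : ∃ w : T.V, T.isLCA x y w := by
  classical
  have hex : ∃ k : ℕ, T.anc (T.parent^[k] (T.leaf x)) (T.leaf y) := by
    obtain ⟨d, hd⟩ := T.reach (T.leaf x)
    exact ⟨d, by rw [hd]; exact root_anc _⟩
  let k0 := Nat.find hex
  refine ⟨T.parent^[k0] (T.leaf x), ⟨k0, rfl⟩, Nat.find_spec hex, ?_⟩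
  intro u hux huy
  obtain ⟨k, hk⟩ := hux
  have hk0 : k0 ≤ k := by
    by_contra hlt
    exact Nat.find_min hex (show k < k0 by omega) (by rw [hk]; exact huy)
  exact ⟨k - k0, by rw [← Function.iterate_add_apply]; rw [← hk]; congr 1; omega⟩

theorem isLCA_unique {x y : L} {w w' : T.V} (h : T.isLCA x y w) (h' : T.isLCA x y w') :
    w = w' :=
  anc_antisymm (h'.2.2 w h.1 h.2.1) (h.2.2 w' h'.1 h'.2.1)

theorem isLCA_symm {x y : L} {w : T.V} (h : T.isLCA x y w) : T.isLCA y x w :=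
  ⟨h.2.1, h.1, fun u h1 h2 => h.2.2 u h2 h1⟩

/-- clusters of distinct children are disjoint. -/
theorem children_disjoint {u u' v : T.V} (h : T.childOf u v) (h' : T.childOf u' v)
    (hne : u ≠ u') : T.cluster u ∩ T.cluster u' = ∅ := by
  by_contra hc
  obtain ⟨z, hz, hz'⟩ := Set.nonempty_iff_ne_empty.2 hc
  exact hne (child_comparable_eq h h' (anc_total hz hz'))

/-- leaves under distinct children have lca the common parent. -/
theorem isLCA_of_children {u u' v : T.V} {x y : L} (h : T.childOf u v) (h' : T.childOf u' v)
    (hne : u ≠ u') (hx : x ∈ T.cluster u) (hy : y ∈ T.cluster u') : T.isLCA x y v := by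
  have hxv : T.anc v (T.leaf x) := anc_trans (by rw [← h.1]; exact anc_parent u) hx
  have hyv : T.anc v (T.leaf y) := anc_trans (by rw [← h'.1]; exact anc_parent u') hy
  refine ⟨hxv, hyv, ?_⟩
  intro w hwx hwy
  rcases anc_total hwx (hx : T.anc u (T.leaf x)) with hc | hc
  · -- w ancestor of u
    obtain ⟨n, hn⟩ := hc
    rcases Nat.eq_zero_or_pos n with h0 | h0
    · -- w = u: then y below u and u', contradiction
      exfalso
      have hwu : w = u := by simpa [h0] using hn.symm
      have : y ∈ T.cluster u ∩ T.cluster u' := ⟨by rw [← hwu]; exact hwy, hy⟩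
      rw [children_disjoint h h' hne] at this
      exact this
    · have : T.parent^[n] u = T.parent^[n-1] (T.parent u) := by
        rw [← Function.iterate_succ_apply]; congr 1; omega
      rw [this, h.1] at hn
      exact ⟨n - 1, hn⟩
  · -- u ancestor of w: then y ∈ cluster u, contradiction
    exfalso
    have : y ∈ T.cluster u ∩ T.cluster u' := ⟨anc_trans hc hwy, hy⟩
    rw [children_disjoint h h' hne] at this
    exact this

theorem cluster_subset_of_isLCA {x y : L} {w v : T.V} (h : T.isLCA x y w)
    (hx : x ∈ T.cluster v) (hy : y ∈ T.cluster v) : T.cluster w ⊆ T.cluster v :=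
  cluster_mono (h.2.2 v hx hy)

/-- In a phylogenetic tree, distinct vertices have distinct clusters. -/
theorem cluster_injective : Function.Injective T.cluster := by
  intro v w hvw
  by_contra hne
  obtain ⟨x0, hx0⟩ := cluster_nonempty (T := T) v
  have hx0w : x0 ∈ T.cluster w := by rw [← hvw]; exact hx0
  -- wlog w is a strict ancestor of v
  have main : ∀ v w : T.V, T.cluster v = T.cluster w → v ≠ w → T.anc w v → False := by
    intro v w hvw hne hanc
    by_cases hleaf : T.isLeaf w
    · exact hne (isLeaf_no_desc hleaf hanc)
    · obtain ⟨u, u', hneuu, hu, hu', huw, hu'w⟩ := T.phylo w hleaf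
      obtain ⟨c0, hc0, hc0v⟩ := exists_child_anc hanc hne
      obtain ⟨xu, hxu⟩ := cluster_nonempty (T := T) u
      obtain ⟨xu', hxu'⟩ := cluster_nonempty (T := T) u'
      have hxuv : xu ∈ T.cluster v := by
        rw [hvw]
        exact anc_trans (by rw [← hu]; exact anc_parent u) hxu
      have hxu'v : xu' ∈ T.cluster v := by
        rw [hvw]
        exact anc_trans (by rw [← hu']; exact anc_parent u') hxu'
      have h1 : u = c0 := by
        apply child_comparable_eq ⟨hu, huw⟩ hc0
        exact anc_total hxu (anc_trans hc0v hxuv)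
      have h2 : u' = c0 := by
        apply child_comparable_eq ⟨hu', hu'w⟩ hc0
        exact anc_total hxu' (anc_trans hc0v hxu'v)
      exact hneuu (h1.trans h2.symm)
  rcases anc_total hx0 hx0w with hc | hc
  · exact main w v hvw.symm (Ne.symm hne) hc
  · exact main v w hvw hne hc

end Basic

end PhyloTree


namespace PhyloTree

section Graph

variable {L M : Type}

/-- Edges of the graph on `C` joining pairs with `δ`-value different from `m`. -/
def Adj (δ : L → L → M) (C : Set L) (m : M) (a b : L) : Prop :=
  a ≠ b ∧ a ∈ C ∧ b ∈ C ∧ δ a b ≠ m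

/-- Reachability in the graph. -/
def Reach (δ : L → L → M) (C : Set L) (m : M) : L → L → Prop :=
  Relation.ReflTransGen (Adj δ C m)

/-- `D` is a connected component of the graph on `C`. -/
def IsComp (δ : L → L → M) (C : Set L) (m : M) (D : Set L) : Prop :=
  ∃ x ∈ C, D = {y : L | Reach δ C m x y}

theorem Reach.mem_of_mem {δ : L → L → M} {C : Set L} {m : M} {x y : L}
    (hx : x ∈ C) (h : Reach δ C m x y) : y ∈ C := by
  induction h with
  | refl => exact hx
  | tail _ hab ih => exact hab.2.2.1

theorem IsComp.nonempty {δ : L → L → M} {C : Set L} {m : M} {D : Set L}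
    (h : IsComp δ C m D) : D.Nonempty := by
  obtain ⟨x, hx, rfl⟩ := h
  exact ⟨x, Relation.ReflTransGen.refl⟩

theorem IsComp.subset {δ : L → L → M} {C : Set L} {m : M} {D : Set L}
    (h : IsComp δ C m D) : D ⊆ C := by
  obtain ⟨x, hx, rfl⟩ := h
  exact fun y hy => Reach.mem_of_mem hx hy

theorem IsComp.closed {δ : L → L → M} {C : Set L} {m : M} {D : Set L}
    (h : IsComp δ C m D) {a b : L} (ha : a ∈ D) (hab : Adj δ C m a b) : b ∈ D := by
  obtain ⟨x, hx, rfl⟩ := h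
  exact Relation.ReflTransGen.tail ha hab

/-- Non-adjacent distinct pairs inside `C` have `δ`-value `m`. -/
theorem delta_eq_of_not_adj {δ : L → L → M} {C : Set L} {m : M} {a b : L}
    (ha : a ∈ C) (hb : b ∈ C) (hne : a ≠ b) (h : ¬ Adj δ C m a b) : δ a b = m := by
  by_contra hd
  exact h ⟨hne, ha, hb, hd⟩

/-- Restriction of reachability to a closed subset. -/
theorem reach_restrict {δ : L → L → M} {C C' : Set L} {m : M} {x : L}
    (hclosed : ∀ y, Reach δ C m x y → y ∈ C') :
    ∀ y, Reach δ C m x y → Reach δ C' m x y := by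
  intro y hy
  induction hy with
  | refl => exact Relation.ReflTransGen.refl
  | @tail a b hxa hab ih =>
    exact Relation.ReflTransGen.tail ih
      ⟨hab.1, hclosed a hxa, hclosed b (Relation.ReflTransGen.tail hxa hab), hab.2.2.2⟩

theorem Reach.mono {δ : L → L → M} {C C' : Set L} {m : M} {x y : L}
    (hsub : ∀ a b, Adj δ C m a b → Adj δ C' m a b) (h : Reach δ C m x y) :
    Reach δ C' m x y :=
  Relation.ReflTransGen.mono hsub _ _ h

theorem adj_mono_set {δ : L → L → M} {C C' : Set L} {m : M}
    (hsub : C ⊆ C') {a b : L} (h : Adj δ C m a b) : Adj δ C' m a b :=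
  ⟨h.1, hsub h.2.1, hsub h.2.2.1, h.2.2.2⟩

end Graph

section Explained

variable {L M : Type} {T : PhyloTree L} {t : T.V → M} {δ : L → L → M}

theorem finite_of_tree (T : PhyloTree L) : Finite L := by
  letI := T.fintypeV
  exact Finite.of_injective T.leaf T.leaf_inj

theorem not_leaf_eq_vertex {v : T.V} (hleaf : ¬ T.isLeaf v) (x : L) : T.leaf x ≠ v :=
  fun h => hleaf ⟨x, h⟩

theorem exists_child_of_mem {v : T.V} {x : L} (hleaf : ¬ T.isLeaf v)
    (hx : x ∈ T.cluster v) : ∃ c : T.V, T.childOf c v ∧ x ∈ T.cluster c :=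
  exists_child_anc hx (not_leaf_eq_vertex hleaf x)

/-- δ-value of a pair of leaves below distinct children. -/
theorem delta_of_children (hexp : T.ExplainsDelta t δ) {v c c' : T.V} {x z : L}
    (hc : T.childOf c v) (hc' : T.childOf c' v) (hne : c ≠ c')
    (hx : x ∈ T.cluster c) (hz : z ∈ T.cluster c') : δ x z = t v := by
  have hlca := isLCA_of_children hc hc' hne hx hz
  have hxz : x ≠ z := by
    rintro rfl
    have : x ∈ T.cluster c ∩ T.cluster c' := ⟨hx, hz⟩
    rw [children_disjoint hc hc' hne] at this
    exact this
  exact (hexp x z hxz v hlca).symm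

theorem delta_cross (hexp : T.ExplainsDelta t δ) {v c : T.V} {x z : L}
    (hc : T.childOf c v) (hx : x ∈ T.cluster c) (hz : z ∈ T.cluster v)
    (hzc : z ∉ T.cluster c) : δ x z = t v := by
  have hleaf : ¬ T.isLeaf v := by
    intro hl
    obtain ⟨y, hy⟩ := hl
    exact hc.2 ((T.leaf_iff v).2 ⟨y, hy⟩ c hc.1)
  obtain ⟨c', hc', hzc'⟩ := exists_child_of_mem hleaf hz
  have hne : c ≠ c' := fun h => hzc (h ▸ hzc')
  exact delta_of_children hexp hc hc' hne hx hzc'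

/-- Reachability from inside a child's cluster, w.r.t. label `t v`, never escapes. -/
theorem reach_stays_in_child (hexp : T.ExplainsDelta t δ) {v c : T.V} {x y : L}
    (hc : T.childOf c v) (hx : x ∈ T.cluster c)
    (h : Reach δ (T.cluster v) (t v) x y) : y ∈ T.cluster c := by
  induction h with
  | refl => exact hx
  | @tail a b hxa hab ih =>
    by_contra hb
    exact hab.2.2.2 (delta_cross hexp hc ih hab.2.2.1 hb)

/-- Any two leaves below an inner vertex `v` are connected w.r.t. any label `m ≠ t v`. -/
theorem reach_of_inner (hexp : T.ExplainsDelta t δ) {v : T.V} {C : Set L} {m : M}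
    (hleaf : ¬ T.isLeaf v) (hsub : T.cluster v ⊆ C) (hm : t v ≠ m) {x y : L}
    (hx : x ∈ T.cluster v) (hy : y ∈ T.cluster v) : Reach δ C m x y := by
  obtain ⟨cx, hcx, hxc⟩ := exists_child_of_mem hleaf hx
  obtain ⟨cy, hcy, hyc⟩ := exists_child_of_mem hleaf hy
  have step : ∀ (a b : L) (ca cb : T.V), T.childOf ca v → T.childOf cb v → ca ≠ cb →
      a ∈ T.cluster ca → b ∈ T.cluster cb → Adj δ C m a b := by
    intro a b ca cb hca hcb hne ha hb
    have hne2 : a ≠ b := by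
      rintro rfl
      have : a ∈ T.cluster ca ∩ T.cluster cb := ⟨ha, hb⟩
      rw [children_disjoint hca hcb hne] at this
      exact this
    refine ⟨hne2, hsub (cluster_mono (by rw [← hca.1]; exact anc_parent ca) ha),
      hsub (cluster_mono (by rw [← hcb.1]; exact anc_parent cb) hb), ?_⟩
    rw [delta_of_children hexp hca hcb hne ha hb]
    exact hm
  by_cases hcc : cx = cy
  · subst hcc
    by_cases hxy : x = y
    · subst hxy; exact Relation.ReflTransGen.refl
    · -- find another child
      obtain ⟨u, u', hneu, hu, hu', huv, hu'v⟩ := T.phylo v (by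
        intro hl; exact hleaf hl)
      have hex : ∃ c2 : T.V, T.childOf c2 v ∧ c2 ≠ cx := by
        by_cases h1 : u = cx
        · exact ⟨u', ⟨hu', hu'v⟩, by rw [← h1]; exact hneu.symm⟩
        · exact ⟨u, ⟨hu, huv⟩, h1⟩
      obtain ⟨c2, hc2, hc2ne⟩ := hex
      obtain ⟨z, hzc2⟩ := cluster_nonempty (T := T) c2
      exact Relation.ReflTransGen.tail
        (Relation.ReflTransGen.single (step x z cx c2 hcx hc2 hc2ne.symm hxc hzc2))
        (step z y c2 cx hc2 hcx hc2ne hzc2 hyc)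
  · exact Relation.ReflTransGen.single (step x y cx cy hcx hcy hcc hxc hyc)

/-- If `v` is not a leaf, every component of `cluster v` w.r.t. `m = t v` is
contained in a child's cluster, hence proper. -/
theorem comp_ssubset (hexp : T.ExplainsDelta t δ) {v : T.V} {D : Set L}
    (hleaf : ¬ T.isLeaf v) (hcomp : IsComp δ (T.cluster v) (t v) D) :
    ∃ c : T.V, T.childOf c v ∧ D ⊆ T.cluster c ∧ D ⊂ T.cluster v := by
  obtain ⟨x, hx, rfl⟩ := hcomp
  obtain ⟨c, hc, hxc⟩ := exists_child_of_mem hleaf hx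
  have hsubc : {y : L | Reach δ (T.cluster v) (t v) x y} ⊆ T.cluster c :=
    fun y hy => reach_stays_in_child hexp hc hxc hy
  refine ⟨c, hc, hsubc, ?_⟩
  -- find another child of v with a leaf outside cluster c
  obtain ⟨u, u', hneu, hu, hu', huv, hu'v⟩ := T.phylo v (fun hl => hleaf hl)
  have hex : ∃ c2 : T.V, T.childOf c2 v ∧ c2 ≠ c := by
    by_cases h1 : u = c
    · exact ⟨u', ⟨hu', hu'v⟩, by rw [← h1]; exact hneu.symm⟩
    · exact ⟨u, ⟨hu, huv⟩, h1⟩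
  obtain ⟨c2, hc2, hc2ne⟩ := hex
  obtain ⟨z, hzc2⟩ := cluster_nonempty (T := T) c2
  refine ⟨fun y hy => Reach.mem_of_mem hx hy, fun hsup => ?_⟩
  have hz : z ∈ T.cluster c := hsubc (hsup (cluster_mono (by rw [← hc2.1]; exact anc_parent c2) hzc2))
  have : z ∈ T.cluster c2 ∩ T.cluster c := ⟨hzc2, hz⟩
  rw [children_disjoint hc2 hc hc2ne] at this
  exact this

/-- **Key lemma**: components of the graph on a cluster are clusters. -/
theorem comp_mem_clusters (hexp : T.ExplainsDelta t δ) :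
    ∀ C ∈ T.clusters, ∀ (m : M) (D : Set L), IsComp δ C m D → D ∈ T.clusters := by
  have hfin : Finite L := finite_of_tree T
  suffices h : ∀ (n : ℕ) (C : Set L), C.ncard ≤ n → C ∈ T.clusters →
      ∀ (m : M) (D : Set L), IsComp δ C m D → D ∈ T.clusters by
    intro C hC m D hD
    exact h C.ncard C le_rfl hC m D hD
  intro n
  induction n with
  | zero =>
    intro C hle hC m D hD
    exfalso
    obtain ⟨v, rfl⟩ := hC
    have := Set.ncard_pos (Set.toFinite _) |>.2 (cluster_nonempty v)
    omega
  | succ n ih =>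
    intro C hCn hC m D hD
    obtain ⟨v, rfl⟩ := hC
    by_cases hleaf : T.isLeaf v
    · -- singleton cluster
      obtain ⟨xl, hxl⟩ := hleaf
      have hsing : T.cluster v = {xl} := by rw [← hxl]; exact cluster_leaf xl
      have hDC : D ⊆ T.cluster v := hD.subset
      obtain ⟨x0, hx0⟩ := hD.nonempty
      have : D = T.cluster v := by
        apply Set.eq_of_subset_of_subset hDC
        rw [hsing]
        rw [hsing] at hDC
        intro y hy
        have := hDC hx0
        simp only [Set.mem_singleton_iff] at this hy ⊢
        rw [hy, ← this]
        exact hx0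
      rw [this]
      exact ⟨v, rfl⟩
    · by_cases hm : m = t v
      · subst hm
        obtain ⟨c, hc, hDc, hproper⟩ := comp_ssubset hexp hleaf hD
        -- D is a component of cluster c
        obtain ⟨x, hx, hDeq⟩ := hD
        have hxc : x ∈ T.cluster c := hDc (by rw [hDeq]; exact Relation.ReflTransGen.refl)
        have hcomp' : IsComp δ (T.cluster c) (t v) D := by
          refine ⟨x, hxc, ?_⟩
          apply Set.eq_of_subset_of_subset
          · intro y hy
            rw [hDeq] at hy
            exact reach_restrict (fun z hz => hDc (by rw [hDeq]; exact hz)) y hy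
          · intro y hy
            rw [hDeq]
            exact Reach.mono (fun a b hab => adj_mono_set
              (cluster_mono (by rw [← hc.1]; exact anc_parent c)) hab) hy
        have hlt : (T.cluster c).ncard < (T.cluster v).ncard := by
          apply Set.ncard_lt_ncard _ (Set.toFinite _)
          obtain ⟨c2, hc2, hc2ne, z, hz, hznotc⟩ : ∃ c2 : T.V, T.childOf c2 v ∧ c2 ≠ c ∧
              ∃ z : L, z ∈ T.cluster v ∧ z ∉ T.cluster c := by
            obtain ⟨u, u', hneu, hu, hu', huv, hu'v⟩ := T.phylo v (fun hl => hleaf hl)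
            have hex : ∃ c2 : T.V, T.childOf c2 v ∧ c2 ≠ c := by
              by_cases h1 : u = c
              · exact ⟨u', ⟨hu', hu'v⟩, by rw [← h1]; exact hneu.symm⟩
              · exact ⟨u, ⟨hu, huv⟩, h1⟩
            obtain ⟨c2, hc2, hc2ne⟩ := hex
            obtain ⟨z, hzc2⟩ := cluster_nonempty (T := T) c2
            refine ⟨c2, hc2, hc2ne, z,
              cluster_mono (by rw [← hc2.1]; exact anc_parent c2) hzc2, ?_⟩
            intro hzc
            have : z ∈ T.cluster c2 ∩ T.cluster c := ⟨hzc2, hzc⟩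
            rw [children_disjoint hc2 hc hc2ne] at this
            exact this
          exact ⟨cluster_mono (by rw [← hc.1]; exact anc_parent c),
            fun hsup => hznotc (hsup hz)⟩
        exact ih (T.cluster c) (by omega) ⟨c, rfl⟩ (t v) D hcomp'
      · -- m ≠ t v : the whole cluster is one component
        obtain ⟨x, hx, hDeq⟩ := hD
        have : D = T.cluster v := by
          rw [hDeq]
          apply Set.eq_of_subset_of_subset
          · exact fun y hy => Reach.mem_of_mem hx hy
          · exact fun y hy => reach_of_inner hexp hleaf (le_refl _) (Ne.symm hm) hx hy
        rw [this]
        exact ⟨v, rfl⟩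

/-- In a discriminating tree, the cluster of a child is a component of the
graph on the parent's cluster. -/
theorem disc_child_comp (hexp : T.ExplainsDelta t δ) (hdisc : T.Discriminating t)
    {v p : T.V} (hc : T.childOf v p) :
    IsComp δ (T.cluster p) (t p) (T.cluster v) := by
  obtain ⟨x0, hx0⟩ := cluster_nonempty (T := T) v
  have hx0p : x0 ∈ T.cluster p := cluster_mono (by rw [← hc.1]; exact anc_parent v) hx0
  refine ⟨x0, hx0p, ?_⟩
  apply Set.eq_of_subset_of_subset
  · intro y hy
    by_cases hleaf : T.isLeaf v
    · obtain ⟨xl, hxl⟩ := hleaf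
      have hsing : T.cluster v = {xl} := by rw [← hxl]; exact cluster_leaf xl
      rw [hsing] at hy hx0
      simp only [Set.mem_singleton_iff] at hy hx0
      rw [hy, ← hx0]
      exact Relation.ReflTransGen.refl
    · have hinner : T.innerEdge v := ⟨by rw [hc.1]; exact Ne.symm hc.2, hleaf⟩
      have hm : t v ≠ t p := by
        have := hdisc v hinner
        rw [hc.1] at this
        exact this
      exact reach_of_inner hexp hleaf
        (cluster_mono (by rw [← hc.1]; exact anc_parent v)) hm hx0 hy
  · intro y hy
    exact reach_stays_in_child hexp hc hx0 hy

/-- **Lemma D**: clusters of a discriminating tree explaining `δ` are clusters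
of every tree explaining `δ`. -/
theorem disc_clusters_subset {Td : PhyloTree L} {td : Td.V → M}
    (hexpd : Td.ExplainsDelta td δ) (hdisc : Td.Discriminating td)
    (hexp : T.ExplainsDelta t δ) : Td.clusters ⊆ T.clusters := by
  rintro C ⟨v, rfl⟩
  suffices h : ∀ (n : ℕ) (v : Td.V), Td.parent^[n] v = Td.root → Td.cluster v ∈ T.clusters by
    obtain ⟨n, hn⟩ := Td.reach v
    exact h n v hn
  intro n
  induction n with
  | zero =>
    intro v hv
    simp only [Function.iterate_zero, id_eq] at hv
    subst hv
    rw [cluster_root]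
    exact ⟨T.root, cluster_root⟩
  | succ n ih =>
    intro v hv
    by_cases hroot : v = Td.root
    · subst hroot
      rw [cluster_root]
      exact ⟨T.root, cluster_root⟩
    · have hp : Td.parent^[n] (Td.parent v) = Td.root := by
        rw [← Function.iterate_succ_apply]
        exact hv
      have hchild : Td.childOf v (Td.parent v) :=
        ⟨rfl, fun h => hroot (parent_eq_self_iff.1 h.symm)⟩
      have hpC := ih (Td.parent v) hp
      exact comp_mem_clusters hexp _ hpC _ _ (disc_child_comp hexpd hdisc hchild)

end Explained

end PhyloTree


namespace PhyloTree

section Builder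

variable {L : Type} [Fintype L]

open scoped Classical

set_option linter.unusedSectionVars false

theorem ne_univ_of_ssubset {C D : Set L} (h : C ⊂ D) : C ≠ Set.univ :=
  fun hC => h.2 (by rw [hC]; exact Set.subset_univ D)

theorem hierarchy_nested {H : Set (Set L)} (hH : IsHierarchy H) {A B : Set L}
    (hA : A ∈ H) (hB : B ∈ H) (hne : (A ∩ B).Nonempty) : A ⊆ B ∨ B ⊆ A := by
  rcases hH.2.2.1 A hA B hB with h | h | h
  · left; intro x hx; have : x ∈ A ∩ B := by rw [h]; exact hx
    exact this.2
  · right; intro x hx; have : x ∈ A ∩ B := by rw [h]; exact hx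
    exact this.1
  · rw [h] at hne; exact absurd hne (by simp)

theorem hierarchy_mem_nonempty {H : Set (Set L)} (hH : IsHierarchy H) {A : Set L}
    (hA : A ∈ H) : A.Nonempty := by
  rcases Set.eq_empty_or_nonempty A with h | h
  · exact absurd (h ▸ hA) hH.2.2.2
  · exact h

/-- The minimal strict superset of `C` in `H` (or `C` itself if none exists). -/
noncomputable def parentSet (H : Set (Set L)) (C : Set L) : Set L :=
  if h : ∃ E, E ∈ H ∧ C ⊂ E ∧ ∀ E' ∈ H, C ⊂ E' → E.ncard ≤ E'.ncard then h.choose else C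

theorem parentSet_mem {H : Set (Set L)} {C : Set L} (hC : C ∈ H) :
    parentSet H C ∈ H := by
  unfold parentSet
  split
  · next h => exact h.choose_spec.1
  · exact hC

theorem parentSet_exists {H : Set (Set L)} {C : Set L} (hU : Set.univ ∈ H)
    (hne : C ≠ Set.univ) :
    ∃ E, E ∈ H ∧ C ⊂ E ∧ ∀ E' ∈ H, C ⊂ E' → E.ncard ≤ E'.ncard := by
  have hSS : {E | E ∈ H ∧ C ⊂ E}.Nonempty :=
    ⟨Set.univ, hU, Set.ssubset_univ_iff.2 hne⟩
  obtain ⟨E, hE, hmin⟩ := Set.exists_min_image {E | E ∈ H ∧ C ⊂ E} Set.ncard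
    (Set.toFinite _) hSS
  exact ⟨E, hE.1, hE.2, fun E' hE' hCE' => hmin E' ⟨hE', hCE'⟩⟩

theorem parentSet_spec {H : Set (Set L)} {C : Set L} (hU : Set.univ ∈ H)
    (hne : C ≠ Set.univ) :
    C ⊂ parentSet H C ∧ parentSet H C ∈ H ∧
      ∀ E' ∈ H, C ⊂ E' → (parentSet H C).ncard ≤ E'.ncard := by
  have h := parentSet_exists hU hne
  unfold parentSet
  rw [dif_pos h]
  exact ⟨h.choose_spec.2.1, h.choose_spec.1, h.choose_spec.2.2⟩

theorem parentSet_univ (H : Set (Set L)) : parentSet H Set.univ = Set.univ := by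
  unfold parentSet
  rw [dif_neg]
  rintro ⟨E, _, hE, _⟩
  exact hE.2 (Set.subset_univ E)

theorem subset_parentSet (H : Set (Set L)) (C : Set L) : C ⊆ parentSet H C := by
  unfold parentSet
  split
  · next h => exact h.choose_spec.2.1.1
  · exact subset_rfl

/-- Minimality: the parent of `C` is contained in any strict `H`-superset. -/
theorem parentSet_subset {H : Set (Set L)} (hH : IsHierarchy H) {C D : Set L}
    (hC : C ∈ H) (hD : D ∈ H) (hCD : C ⊂ D) : parentSet H C ⊆ D := by
  have hne : C ≠ Set.univ := ne_univ_of_ssubset hCD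
  obtain ⟨hsub, hmem, hmin⟩ := parentSet_spec hH.1 hne
  have hint : (parentSet H C ∩ D).Nonempty := by
    obtain ⟨x, hx⟩ := hierarchy_mem_nonempty hH hC
    exact ⟨x, hsub.1 hx, hCD.1 hx⟩
  rcases hierarchy_nested hH hmem hD hint with h | h
  · exact h
  · have h1 : (parentSet H C).ncard ≤ D.ncard := hmin D hD hCD
    have h2 : D = parentSet H C :=
      Set.eq_of_subset_of_ncard_le h h1 (Set.toFinite _)
    rw [← h2]

theorem subset_iterate_parentSet (H : Set (Set L)) (C : Set L) (n : ℕ) :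
    C ⊆ (parentSet H)^[n] C := by
  induction n with
  | zero => exact subset_rfl
  | succ n ih =>
    rw [Function.iterate_succ_apply']
    exact ih.trans (subset_parentSet H _)

theorem iterate_parentSet_mem {H : Set (Set L)} {C : Set L} (hC : C ∈ H) (n : ℕ) :
    (parentSet H)^[n] C ∈ H := by
  induction n with
  | zero => exact hC
  | succ n ih =>
    rw [Function.iterate_succ_apply']
    exact parentSet_mem ih

theorem exists_iterate_parentSet {H : Set (Set L)} (hH : IsHierarchy H) :
    ∀ (k : ℕ) (C D : Set L), C ∈ H → D ∈ H → C ⊆ D → D.ncard - C.ncard ≤ k →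
      ∃ n, (parentSet H)^[n] C = D := by
  intro k
  induction k with
  | zero =>
    intro C D hC hD hsub hcard
    refine ⟨0, ?_⟩
    have h1 : C.ncard ≤ D.ncard := Set.ncard_le_ncard hsub (Set.toFinite _)
    simp only [Function.iterate_zero, id_eq]
    exact Set.eq_of_subset_of_ncard_le hsub (by omega) (Set.toFinite _)
  | succ k ih =>
    intro C D hC hD hsub hcard
    by_cases heq : C = D
    · exact ⟨0, heq⟩
    · have hss : C ⊂ D := ⟨hsub, fun h => heq (Set.Subset.antisymm hsub h)⟩
      have hne : C ≠ Set.univ := ne_univ_of_ssubset hss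
      obtain ⟨hsub2, hmem, _⟩ := parentSet_spec hH.1 hne
      have hPD : parentSet H C ⊆ D := parentSet_subset hH hC hD hss
      have hlt : C.ncard < (parentSet H C).ncard :=
        Set.ncard_lt_ncard hsub2 (Set.toFinite _)
      have hle : (parentSet H C).ncard ≤ D.ncard := Set.ncard_le_ncard hPD (Set.toFinite _)
      obtain ⟨n, hn⟩ := ih (parentSet H C) D hmem hD hPD (by omega)
      exact ⟨n + 1, by rw [Function.iterate_succ_apply]; exact hn⟩

/-- Every element of a nonsingleton `H`-set lies in a "child" of that set. -/
theorem exists_hchild {H : Set (Set L)} (hH : IsHierarchy H) {C : Set L} (hC : C ∈ H)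
    {x : L} (hx : x ∈ C) (hns : C ≠ {x}) :
    ∃ u, u ∈ H ∧ x ∈ u ∧ u ⊂ C ∧ parentSet H u = C := by
  classical
  have hsub : ({x} : Set L) ⊆ C := by simpa using hx
  have hex : ∃ n, (parentSet H)^[n] ({x} : Set L) = C :=
    exists_iterate_parentSet hH _ {x} C (hH.2.1 x) hC hsub le_rfl
  let n0 := Nat.find hex
  have hn0 : (parentSet H)^[n0] ({x} : Set L) = C := Nat.find_spec hex
  have hpos : n0 ≠ 0 := by
    intro h
    rw [h] at hn0
    exact hns hn0.symm
  refine ⟨(parentSet H)^[n0 - 1] {x}, iterate_parentSet_mem (hH.2.1 x) _,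
    subset_iterate_parentSet H {x} _ rfl, ⟨?_, ?_⟩, ?_⟩
  · rw [← hn0]
    have : n0 = (n0 - 1) + 1 := by omega
    rw [this, Function.iterate_succ_apply']
    exact subset_parentSet H _
  · intro hsup
    have heq : (parentSet H)^[n0 - 1] ({x} : Set L) = C := by
      apply Set.Subset.antisymm _ hsup
      rw [← hn0]
      have : n0 = (n0 - 1) + 1 := by omega
      rw [this, Function.iterate_succ_apply']
      exact subset_parentSet H _
    exact Nat.find_min hex (show n0 - 1 < n0 by omega) heq
  · have h2 : (parentSet H)^[(n0 - 1) + 1] ({x} : Set L) = C := by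
      rw [(by omega : n0 - 1 + 1 = n0)]
      exact hn0
    rw [Function.iterate_succ_apply'] at h2
    exact h2

/-- The phylogenetic tree associated with a hierarchy. -/
noncomputable def buildTree (H : Set (Set L)) (hH : IsHierarchy H) : PhyloTree L where
  V := {C : Set L // C ∈ H}
  fintypeV := by
    classical
    haveI : Finite (Set L) := inferInstance
    haveI : Finite {C : Set L // C ∈ H} := Subtype.finite
    exact Fintype.ofFinite _
  root := ⟨Set.univ, hH.1⟩
  parent C := ⟨parentSet H C.1, parentSet_mem C.2⟩
  leaf x := ⟨{x}, hH.2.1 x⟩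
  parent_root := Subtype.ext (parentSet_univ H)
  reach := by
    intro v
    obtain ⟨n, hn⟩ := exists_iterate_parentSet hH ((Set.univ : Set L).ncard - v.1.ncard)
      v.1 Set.univ v.2 hH.1 (Set.subset_univ _) le_rfl
    refine ⟨n, ?_⟩
    have key : ∀ (k : ℕ) (w : {C : Set L // C ∈ H}),
        ((fun C : {C : Set L // C ∈ H} => (⟨parentSet H C.1, parentSet_mem C.2⟩ :
          {C : Set L // C ∈ H}))^[k] w).1 = (parentSet H)^[k] w.1 := by
      intro k
      induction k with
      | zero => intro w; rfl
      | succ k ihk =>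
        intro w
        rw [Function.iterate_succ_apply, Function.iterate_succ_apply]
        exact ihk _
    exact Subtype.ext ((key n v).trans hn)
  leaf_inj := by
    intro x y hxy
    have : ({x} : Set L) = {y} := congrArg Subtype.val hxy
    simpa using this
  leaf_iff := by
    intro v
    constructor
    · intro hnochild
      by_contra hns
      push_neg at hns
      obtain ⟨x, hx⟩ := hierarchy_mem_nonempty hH v.2
      have hCne : v.1 ≠ {x} := by
        intro h
        exact hns x (Subtype.ext h.symm)
      obtain ⟨u, huH, hxu, husub, hupar⟩ := exists_hchild hH v.2 hx hCne
      have := hnochild ⟨u, huH⟩ (Subtype.ext hupar)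
      have : u = v.1 := congrArg Subtype.val this
      exact husub.2 (this ▸ subset_rfl)
    · rintro ⟨x, hx⟩
      intro u hu
      have hval : parentSet H u.1 = v.1 := congrArg Subtype.val hu
      by_cases hroot : u.1 = Set.univ
      · have : v.1 = Set.univ := by rw [← hval, hroot, parentSet_univ]
        apply Subtype.ext
        rw [this, hroot]
      · obtain ⟨hss, _, _⟩ := parentSet_spec hH.1 hroot
        rw [hval] at hss
        -- u.1 ⊂ v.1 = {x}
        have hvx : v.1 = {x} := congrArg Subtype.val hx.symm
        rw [hvx] at hss
        have : u.1 = ∅ := by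
          rcases Set.eq_empty_or_nonempty u.1 with h | h
          · exact h
          · exfalso
            obtain ⟨y, hy⟩ := h
            have hyx : y = x := hss.1 hy
            apply hss.2
            intro z hz
            simp only [Set.mem_singleton_iff] at hz
            rw [hz, ← hyx]
            exact hy
        exact absurd (this ▸ u.2) hH.2.2.2
  phylo := by
    intro v hnleaf
    obtain ⟨x, hx⟩ := hierarchy_mem_nonempty hH v.2
    have hCne : v.1 ≠ {x} := by
      intro h
      exact hnleaf ⟨x, Subtype.ext h.symm⟩
    obtain ⟨u, huH, hxu, husub, hupar⟩ := exists_hchild hH v.2 hx hCne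
    obtain ⟨y, hyC, hynotu⟩ : ∃ y, y ∈ v.1 ∧ y ∉ u := by
      by_contra hcon
      push_neg at hcon
      exact husub.2 (fun z hz => hcon z hz)
    have hCney : v.1 ≠ {y} := by
      intro h
      have : x = y := by
        have := hx
        rw [h] at this
        simpa using this
      exact hynotu (this ▸ hxu)
    obtain ⟨u', hu'H, hyu', hu'sub, hu'par⟩ := exists_hchild hH v.2 hyC hCney
    refine ⟨⟨u, huH⟩, ⟨u', hu'H⟩, ?_, Subtype.ext hupar, Subtype.ext hu'par, ?_, ?_⟩
    · intro h
      have : u = u' := congrArg Subtype.val h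
      exact hynotu (this ▸ hyu')
    · intro h
      have : u = v.1 := congrArg Subtype.val h
      exact husub.2 (this ▸ subset_rfl)
    · intro h
      have : u' = v.1 := congrArg Subtype.val h
      exact hu'sub.2 (this ▸ subset_rfl)

theorem buildTree_parent_val {H : Set (Set L)} (hH : IsHierarchy H)
    (v : (buildTree H hH).V) : ((buildTree H hH).parent v).1 = parentSet H v.1 := rfl

theorem buildTree_iterate_val {H : Set (Set L)} (hH : IsHierarchy H)
    (n : ℕ) (v : (buildTree H hH).V) :
    ((buildTree H hH).parent^[n] v).1 = (parentSet H)^[n] v.1 := by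
  induction n generalizing v with
  | zero => rfl
  | succ n ihn =>
    rw [Function.iterate_succ_apply, Function.iterate_succ_apply]
    exact ihn _

theorem buildTree_anc {H : Set (Set L)} (hH : IsHierarchy H)
    (v w : (buildTree H hH).V) : (buildTree H hH).anc v w ↔ w.1 ⊆ v.1 := by
  constructor
  · rintro ⟨n, hn⟩
    have := buildTree_iterate_val hH n w
    rw [hn] at this
    rw [this]
    exact subset_iterate_parentSet H _ n
  · intro hsub
    obtain ⟨n, hn⟩ := exists_iterate_parentSet hH (v.1.ncard - w.1.ncard) w.1 v.1
      w.2 v.2 hsub le_rfl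
    exact ⟨n, Subtype.ext ((buildTree_iterate_val hH n w).trans hn)⟩

theorem buildTree_leaf_val {H : Set (Set L)} (hH : IsHierarchy H) (x : L) :
    ((buildTree H hH).leaf x).1 = {x} := rfl

theorem buildTree_cluster {H : Set (Set L)} (hH : IsHierarchy H)
    (v : (buildTree H hH).V) : (buildTree H hH).cluster v = v.1 := by
  ext x
  rw [mem_cluster]
  rw [buildTree_anc hH v ((buildTree H hH).leaf x)]
  exact Set.singleton_subset_iff

theorem buildTree_clusters {H : Set (Set L)} (hH : IsHierarchy H) :
    (buildTree H hH).clusters = H := by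
  ext C
  constructor
  · rintro ⟨v, rfl⟩
    rw [buildTree_cluster hH v]
    exact v.2
  · intro hC
    exact ⟨⟨C, hC⟩, buildTree_cluster hH ⟨C, hC⟩⟩

theorem buildTree_isLCA {H : Set (Set L)} (hH : IsHierarchy H) (x y : L)
    (w : (buildTree H hH).V) :
    (buildTree H hH).isLCA x y w ↔
      (x ∈ w.1 ∧ y ∈ w.1 ∧ ∀ U ∈ H, x ∈ U → y ∈ U → w.1 ⊆ U) := by
  unfold isLCA
  rw [buildTree_anc hH w ((buildTree H hH).leaf x),
    buildTree_anc hH w ((buildTree H hH).leaf y)]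
  constructor
  · rintro ⟨h1, h2, h3⟩
    refine ⟨Set.singleton_subset_iff.mp h1, Set.singleton_subset_iff.mp h2, ?_⟩
    intro U hU hxU hyU
    have := h3 ⟨U, hU⟩
      ((buildTree_anc hH _ _).mpr (Set.singleton_subset_iff.mpr hxU))
      ((buildTree_anc hH _ _).mpr (Set.singleton_subset_iff.mpr hyU))
    exact (buildTree_anc hH _ _).mp this
  · rintro ⟨h1, h2, h3⟩
    refine ⟨Set.singleton_subset_iff.mpr h1, Set.singleton_subset_iff.mpr h2, ?_⟩
    intro u hux huy
    rw [buildTree_anc hH] at hux huy ⊢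
    exact h3 u.1 u.2 (Set.singleton_subset_iff.mp hux) (Set.singleton_subset_iff.mp huy)

end Builder

end PhyloTree


namespace PhyloTree

section Eps

open scoped Classical

set_option linter.unusedSectionVars false

variable {L N : Type} [Fintype L] {T : PhyloTree L} {lam : T.V → Finset N}
  {ε : L → L → Finset N}

/-- The set `S_k(y)` of leaves whose path to `y` avoids the label `k`. -/
def Sset (ε : L → L → Finset N) (k : N) (y : L) : Set L :=
  {x : L | x = y ∨ k ∉ ε x y}

theorem mem_Sset_self (ε : L → L → Finset N) (k : N) (y : L) : y ∈ Sset ε k y :=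
  Or.inl rfl

/-- `S_k(y)` is a cluster of every tree explaining `ε`; when proper, the top
edge of the corresponding vertex carries `k`. -/
theorem Sset_cluster (hexp : T.ExplainsEps lam ε) (k : N) (y : L) :
    ∃ v : T.V, T.cluster v = Sset ε k y ∧
      (Sset ε k y ≠ Set.univ → T.parent v ≠ v ∧ k ∈ lam v) := by
  classical
  set ly := T.leaf y with hly
  obtain ⟨d, hd⟩ : ∃ d, T.parent^[d] ly = T.root := T.reach ly
  obtain ⟨istar, histar1, histar2, histar3⟩ :
      ∃ i, i ≤ d ∧ (∀ j, j < i → k ∉ lam (T.parent^[j] ly)) ∧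
        ∀ i', i' ≤ d → (∀ j, j < i' → k ∉ lam (T.parent^[j] ly)) → i' ≤ i := by
    set P : ℕ → Prop := fun i => ∀ j, j < i → k ∉ lam (T.parent^[j] ly) with hP
    refine ⟨Nat.findGreatest P d, Nat.findGreatest_le d, ?_, ?_⟩
    · exact Nat.findGreatest_spec (P := P) (Nat.zero_le d) (fun j hj => absurd hj (Nat.not_lt_zero j))
    · intro i' hi' hPi'
      exact Nat.le_findGreatest (P := P) hi' hPi'
  set v := T.parent^[istar] ly with hv
  -- minimal representation of an ancestor of ly
  have minrep : ∀ u : T.V, T.anc u ly → ∃ i, T.parent^[i] ly = u ∧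
      (∀ j, j < i → T.parent^[j] ly ≠ u) ∧ i ≤ d := by
    intro u hu
    have hexu : ∃ i, T.parent^[i] ly = u := hu
    refine ⟨Nat.find hexu, Nat.find_spec hexu, fun j hj => Nat.find_min hexu hj, ?_⟩
    by_contra hgt
    push_neg at hgt
    have : T.parent^[Nat.find hexu] ly = T.root := by
      have : T.parent^[Nat.find hexu] ly =
          T.parent^[Nat.find hexu - d] (T.parent^[d] ly) := by
        rw [← Function.iterate_add_apply]
        congr 1
        omega
      rw [this, hd, parent_iterate_root]
    have hroot : T.parent^[d] ly = u := by rw [hd, ← this, Nat.find_spec hexu]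
    exact Nat.find_min hexu hgt hroot
  have hclusterSset : T.cluster v = Sset ε k y := by
    apply Set.eq_of_subset_of_subset
    · -- cluster v ⊆ Sset
      intro x' hx'
      by_cases hne : x' = y
      · exact Or.inl hne
      · right
        obtain ⟨w2, hw2⟩ := exists_isLCA (T := T) x' y
        obtain ⟨i0, hi0, hi0min, hi0d⟩ := minrep w2 hw2.2.1
        have hancv : T.anc v w2 := hw2.2.2 v hx' ⟨istar, rfl⟩
        have hi0star : i0 ≤ istar := by
          by_contra hgt
          push_neg at hgt
          have hanc2 : T.anc w2 v := by
            refine ⟨i0 - istar, ?_⟩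
            rw [hv, ← Function.iterate_add_apply, ← hi0]
            congr 1
            omega
          have := anc_antisymm hancv hanc2
          exact hi0min istar (by omega) (by rw [← hv, this])
        rw [hexp x' y hne w2 hw2 k]
        rintro ⟨u, ⟨hwu, hune, huy⟩, hk⟩
        obtain ⟨j, hj, hjmin, hjd⟩ := minrep u huy
        have hji0 : j < i0 := by
          by_contra hge
          push_neg at hge
          have hanc3 : T.anc u w2 := by
            refine ⟨j - i0, ?_⟩
            rw [← hi0, ← Function.iterate_add_apply, ← hj]
            congr 1
            omega
          exact hune (anc_antisymm hanc3 hwu)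
        have := histar2 j (by omega)
        rw [hj] at this
        exact this hk
    · -- Sset ⊆ cluster v
      rintro x' (rfl | hx')
      · exact ⟨istar, rfl⟩
      · by_cases hne : x' = y
        · rw [hne]; exact ⟨istar, rfl⟩
        · obtain ⟨w2, hw2⟩ := exists_isLCA (T := T) x' y
          obtain ⟨i0, hi0, hi0min, hi0d⟩ := minrep w2 hw2.2.1
          -- path from w2 to y is k-free
          have hfree : ∀ j, j < i0 → k ∉ lam (T.parent^[j] ly) := by
            intro j hj hk
            have hiff := hexp x' y hne w2 hw2 k
            have : k ∈ ε x' y := by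
              rw [hiff]
              refine ⟨T.parent^[j] ly, ⟨?_, ?_, ⟨j, rfl⟩⟩, hk⟩
              · refine ⟨i0 - j, ?_⟩
                rw [← Function.iterate_add_apply, ← hi0]
                congr 1
                omega
              · intro h
                exact hi0min j hj h
            exact hx' this
          have hi0star : i0 ≤ istar := histar3 i0 hi0d hfree
          have hancvw2 : T.anc v w2 := by
            refine ⟨istar - i0, ?_⟩
            rw [hv, ← hi0, ← Function.iterate_add_apply]
            congr 1
            omega
          exact anc_trans hancvw2 hw2.1
  refine ⟨v, hclusterSset, ?_⟩
  intro hne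
  have histard : istar < d := by
    rcases Nat.lt_or_ge istar d with h | h
    · exact h
    · exfalso
      have heq : istar = d := le_antisymm histar1 h
      apply hne
      rw [← hclusterSset, hv, heq, hd, cluster_root]
  have hvroot : v ≠ T.root := by
    intro h
    exact hne (by rw [← hclusterSset, h, cluster_root])
  constructor
  · intro h
    exact hvroot (parent_eq_self_iff.1 h)
  · have hex2 : ∃ j, j < istar + 1 ∧ k ∈ lam (T.parent^[j] ly) := by
      by_contra hcon
      push_neg at hcon
      have := histar3 (istar + 1) (by omega) (fun j hj => hcon j hj)
      omega
    obtain ⟨j, hj, hk⟩ := hex2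
    have hj2 : j = istar := by
      by_contra hne2
      exact (histar2 j (by omega)) hk
    rw [hj2] at hk
    exact hk

/-- All labels appearing in `ε`. -/
noncomputable def bigE (ε : L → L → Finset N) : Finset N :=
  Finset.univ.biUnion (fun x : L => Finset.univ.biUnion (fun y : L => ε x y))

theorem mem_bigE {k : N} {x y : L} (h : k ∈ ε x y) : k ∈ bigE ε := by
  unfold bigE
  rw [Finset.mem_biUnion]
  exact ⟨x, Finset.mem_univ x, by rw [Finset.mem_biUnion]; exact ⟨y, Finset.mem_univ y, h⟩⟩

/-- Candidate minimal labeling on clusters. -/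
noncomputable def lamS (ε : L → L → Finset N) (C : Set L) : Finset N :=
  (bigE ε).filter (fun k => ∃ y : L, Sset ε k y = C)

theorem mem_lamS {k : N} {C : Set L} :
    k ∈ lamS ε C ↔ k ∈ bigE ε ∧ ∃ y : L, Sset ε k y = C := Finset.mem_filter

/-- minimality of the labels `lamS`. -/
theorem lamS_subset (hexp : T.ExplainsEps lam ε) {C : Set L} (v : T.V)
    (hv : T.cluster v = C) (hvroot : T.parent v ≠ v) : lamS ε C ⊆ lam v := by
  intro k hk
  obtain ⟨hbig, y', hy'⟩ := mem_lamS.1 hk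
  obtain ⟨v2, hv2eq, hv2lab⟩ := Sset_cluster hexp k y'
  have hCuniv : Sset ε k y' ≠ Set.univ := by
    intro h
    apply hvroot
    have : T.cluster v = T.cluster T.root := by
      rw [hv, ← hy', h, cluster_root]
    rw [cluster_injective this]
    exact T.parent_root
  obtain ⟨_, hklab⟩ := hv2lab hCuniv
  have : v2 = v := cluster_injective (by rw [hv2eq, hy', ← hv])
  rwa [this] at hklab

/-- **Key lemma for ε**: a tree built on a hierarchy containing all the sets
`S_k(y)` explains `ε`, when labeled by `lamS`. -/
theorem buildTree_explainsEps {H : Set (Set L)} (hH : IsHierarchy H)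
    (hS : ∀ (k : N) (y : L), Sset ε k y ∈ H)
    (hexp2 : T.ExplainsEps lam ε) :
    (buildTree H hH).ExplainsEps (fun v => lamS ε v.1) ε := by
  intro x y hxy w hw k
  rw [buildTree_isLCA] at hw
  obtain ⟨hxw, hyw, hmin⟩ := hw
  constructor
  · intro hk
    have hxnot : x ∉ Sset ε k y := by
      rintro (h | h)
      · exact hxy h
      · exact h hk
    have hsub : Sset ε k y ⊆ w.1 := by
      rcases hierarchy_nested hH (hS k y) w.2 ⟨y, mem_Sset_self ε k y, hyw⟩ with h | h
      · exact h
      · exact absurd (h hxw) hxnot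
    refine ⟨⟨Sset ε k y, hS k y⟩, ⟨?_, ?_, ?_⟩, ?_⟩
    · exact (buildTree_anc hH _ _).mpr hsub
    · intro h
      have : Sset ε k y = w.1 := congrArg Subtype.val h
      exact hxnot (this ▸ hxw)
    · exact (buildTree_anc hH _ _).mpr (Set.singleton_subset_iff.mpr (mem_Sset_self ε k y))
    · exact mem_lamS.2 ⟨mem_bigE hk, y, rfl⟩
  · rintro ⟨u, ⟨hwu, hune, huy⟩, hk⟩
    rw [buildTree_anc] at hwu huy
    obtain ⟨hbig, y', hy'⟩ := mem_lamS.1 hk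
    have hyu : y ∈ u.1 := Set.singleton_subset_iff.mp huy
    have hxu : x ∉ u.1 := by
      intro hxu
      apply hune
      apply Subtype.ext
      exact Set.Subset.antisymm hwu (hmin u.1 u.2 hxu hyu)
    obtain ⟨v2, hv2eq, hv2lab⟩ := Sset_cluster hexp2 k y'
    have hCuniv : Sset ε k y' ≠ Set.univ := by
      intro h
      rw [hy'] at h
      exact hxu (h ▸ Set.mem_univ x)
    obtain ⟨hv2root, hklab⟩ := hv2lab hCuniv
    have hyv2 : y ∈ T.cluster v2 := by rw [hv2eq, hy']; exact hyu
    have hxv2 : x ∉ T.cluster v2 := by rw [hv2eq, hy']; exact hxu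
    obtain ⟨w2, hw2⟩ := exists_isLCA (T := T) x y
    have hancw2v2 : T.anc w2 v2 := by
      rcases anc_total hw2.2.1 hyv2 with h | h
      · exact h
      · exact absurd (cluster_mono h hw2.1) hxv2
    have hne2 : v2 ≠ w2 := by
      intro h
      exact hxv2 (h ▸ hw2.1)
    rw [hexp2 x y hxy w2 hw2 k]
    exact ⟨v2, ⟨hancw2v2, hne2, hyv2⟩, hklab⟩

end Eps

end PhyloTree


namespace PhyloTree

section Basic2

variable {L : Type} {T : PhyloTree L}

theorem clusters_nested {A B : Set L} (hA : A ∈ T.clusters) (hB : B ∈ T.clusters) :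
    A ∩ B = A ∨ A ∩ B = B ∨ A ∩ B = ∅ := by
  obtain ⟨v, rfl⟩ := hA
  obtain ⟨w, rfl⟩ := hB
  rcases cluster_nested_or_disjoint v w with h | h | h
  · exact Or.inl (Set.inter_eq_left.2 h)
  · exact Or.inr (Or.inl (Set.inter_eq_right.2 h))
  · exact Or.inr (Or.inr h)

end Basic2

section Delta

open scoped Classical

set_option linter.unusedSectionVars false

variable {L M : Type} [Fintype L] {T : PhyloTree L} {t : T.V → M} {δ : L → L → M}

/-- Label of a cluster: the label of (the unique) vertex with this cluster. -/
noncomputable def mlab (T : PhyloTree L) (t : T.V → M) (C : Set L) : M :=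
  if h : C ∈ T.clusters then t h.choose else t T.root

theorem mlab_eq {v : T.V} {C : Set L} (hv : T.cluster v = C) : mlab T t C = t v := by
  have hC : C ∈ T.clusters := ⟨v, hv⟩
  unfold mlab
  rw [dif_pos hC]
  congr 1
  apply cluster_injective (T := T)
  rw [hC.choose_spec, hv]

/-- The family of clusters of the discriminating tree, generated recursively. -/
inductive DG (T : PhyloTree L) (t : T.V → M) (δ : L → L → M) : Set L → Prop
  | top : DG T t δ Set.univ
  | comp {C D : Set L} : DG T t δ C → IsComp δ C (mlab T t C) D → DG T t δ D

theorem DG_mem_clusters (hexp : T.ExplainsDelta t δ) {C : Set L} (h : DG T t δ C) :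
    C ∈ T.clusters := by
  induction h with
  | top => exact ⟨T.root, cluster_root⟩
  | comp hC1 hcomp IH => exact comp_mem_clusters hexp _ IH _ _ hcomp

theorem DG_nonempty (hexp : T.ExplainsDelta t δ) {C : Set L} (h : DG T t δ C) :
    C.Nonempty := by
  obtain ⟨v, hv⟩ := DG_mem_clusters hexp h
  rw [← hv]
  exact cluster_nonempty v

theorem DG_comp_proper (hexp : T.ExplainsDelta t δ) {C D : Set L}
    (hC : C ∈ T.clusters) (hnt : C.Nontrivial)
    (hcomp : IsComp δ C (mlab T t C) D) : D ⊂ C := by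
  obtain ⟨v, hv⟩ := hC
  have hleaf : ¬ T.isLeaf v := by
    rintro ⟨xl, hxl⟩
    have hsing : T.cluster v = {xl} := by rw [← hxl]; exact cluster_leaf xl
    obtain ⟨a, ha, b, hb, hab⟩ := hnt
    rw [← hv, hsing] at ha hb
    rw [Set.mem_singleton_iff] at ha hb
    exact hab (ha.trans hb.symm)
  rw [mlab_eq hv] at hcomp
  rw [← hv] at hcomp
  obtain ⟨c, hc, hsubc, hproper⟩ := comp_ssubset hexp hleaf hcomp
  rw [hv] at hproper
  exact hproper

theorem DG_singleton (hexp : T.ExplainsDelta t δ) :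
    ∀ (n : ℕ) (C : Set L), C.ncard ≤ n → DG T t δ C → ∀ x ∈ C, DG T t δ {x} := by
  intro n
  induction n with
  | zero =>
    intro C hle hC x hx
    exfalso
    have : 0 < C.ncard := Set.ncard_pos (Set.toFinite _) |>.2 ⟨x, hx⟩
    omega
  | succ n ih =>
    intro C hle hC x hx
    by_cases heq : C = {x}
    · rw [← heq]; exact hC
    · have hnt : C.Nontrivial := by
        by_contra hcon
        rw [Set.not_nontrivial_iff] at hcon
        exact heq (Set.eq_singleton_iff_unique_mem.2 ⟨hx, fun y hy => hcon hy hx⟩)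
      set D := {z | Reach δ C (mlab T t C) x z} with hD
      have hcomp : IsComp δ C (mlab T t C) D := ⟨x, hx, rfl⟩
      have hDG : DG T t δ D := DG.comp hC hcomp
      have hproper : D ⊂ C := DG_comp_proper hexp (DG_mem_clusters hexp hC) hnt hcomp
      have hlt : D.ncard < C.ncard := Set.ncard_lt_ncard hproper (Set.toFinite _)
      exact ih D (by omega) hDG x Relation.ReflTransGen.refl

theorem Hdelta_isHierarchy (hexp : T.ExplainsDelta t δ) :
    IsHierarchy {C : Set L | DG T t δ C} := by
  refine ⟨DG.top, ?_, ?_, ?_⟩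
  · intro x
    exact DG_singleton hexp (Set.univ : Set L).ncard Set.univ le_rfl DG.top x (Set.mem_univ x)
  · intro A hA B hB
    exact clusters_nested (DG_mem_clusters hexp hA) (DG_mem_clusters hexp hB)
  · intro h
    obtain ⟨x, hx⟩ := DG_nonempty hexp h
    exact hx

/-- **Key structural lemma**: a `DG`-set strictly inside another `DG`-set is
contained in a component of the latter. -/
theorem DG_subset_comp (hexp : T.ExplainsDelta t δ) {D : Set L} (hD : DG T t δ D) :
    ∀ C0 : Set L, DG T t δ C0 → D ⊂ C0 →
      ∃ P, IsComp δ C0 (mlab T t C0) P ∧ D ⊆ P := by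
  induction hD with
  | top =>
    intro C0 _ hss
    exact absurd (Set.subset_univ C0) hss.2
  | @comp C1 D hC1 hcomp IH =>
    intro C0 hC0 hss
    have hDne : D.Nonempty := hcomp.nonempty
    have hC1cl : C1 ∈ T.clusters := DG_mem_clusters hexp hC1
    have hC0cl : C0 ∈ T.clusters := DG_mem_clusters hexp hC0
    by_cases heq : C1 = C0
    · subst heq
      exact ⟨D, hcomp, subset_rfl⟩
    · have hnest : C1 ⊆ C0 ∨ C0 ⊆ C1 := by
        rcases clusters_nested hC1cl hC0cl with h | h | h
        · exact Or.inl (Set.inter_eq_left.1 h)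
        · exact Or.inr (Set.inter_eq_right.1 h)
        · exfalso
          obtain ⟨xd, hxd⟩ := hDne
          have : xd ∈ C1 ∩ C0 := ⟨hcomp.subset hxd, hss.1 hxd⟩
          rw [h] at this
          exact this
      rcases hnest with h | h
      · obtain ⟨P, hP, hsubP⟩ := IH C0 hC0 ⟨h, fun h' => heq (Set.Subset.antisymm h h')⟩
        exact ⟨P, hP, hcomp.subset.trans hsubP⟩
      · -- C0 ⊂ C1 : direct argument
        have hC0C1 : C0 ⊂ C1 := ⟨h, fun h' => heq (Set.Subset.antisymm h' h)⟩
        obtain ⟨x1, hx1C1, hDeq⟩ := hcomp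
        have hx1D : x1 ∈ D := by rw [hDeq]; exact Relation.ReflTransGen.refl
        obtain ⟨v0, hv0⟩ := hC0cl
        have hx1C0 : x1 ∈ C0 := hss.1 hx1D
        have hx1v0 : x1 ∈ T.cluster v0 := by rw [hv0]; exact hx1C0
        have hleaf0 : ¬ T.isLeaf v0 := by
          rintro ⟨xl, hxl⟩
          have hC0eq : C0 = {xl} := by rw [← hv0, ← hxl, cluster_leaf]
          obtain ⟨xd, hxd⟩ := hDne
          have h1 : xd ∈ ({xl} : Set L) := hC0eq ▸ hss.1 hxd
          apply hss.2
          rw [hC0eq]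
          intro z hz
          rw [Set.mem_singleton_iff] at hz h1
          rw [hz, ← h1]
          exact hxd
        obtain ⟨c, hc, hx1c⟩ := exists_child_of_mem hleaf0 hx1v0
        have hDcl : D ∈ T.clusters :=
          comp_mem_clusters hexp C1 hC1cl _ D ⟨x1, hx1C1, hDeq⟩
        obtain ⟨vD, hvD⟩ := hDcl
        have hx1vD : x1 ∈ T.cluster vD := by rw [hvD]; exact hx1D
        have hanc0D : T.anc v0 vD := by
          rcases anc_total hx1vD hx1v0 with hcase | hcase
          · exfalso
            apply hss.2
            rw [← hv0, ← hvD]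
            exact cluster_mono hcase
          · exact hcase
        have hDc : D ⊆ T.cluster c := by
          rcases anc_total hx1vD hx1c with hcase | hcase
          · -- vD ancestor of c
            obtain ⟨n, hn⟩ := hcase
            rcases Nat.eq_zero_or_pos n with h0 | h0
            · have hceq : c = vD := by simpa [h0] using hn
              rw [← hvD, ← hceq]
            · have hn' : T.parent^[n-1] (T.parent c) = vD := by
                have hstep : T.parent^[n-1+1] c = vD := by
                  rw [(by omega : n - 1 + 1 = n)]
                  exact hn
                rw [Function.iterate_succ_apply] at hstep
                exact hstep
              rw [hc.1] at hn'
              have hancvD0 : T.anc vD v0 := ⟨n-1, hn'⟩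
              have hv0vD := anc_antisymm hanc0D hancvD0
              exfalso
              apply hss.2
              rw [← hv0, hv0vD, hvD]
            -- done
          · intro z hz
            rw [← hvD] at hz
            exact cluster_mono hcase hz
        obtain ⟨c2, hc2, hc2ne⟩ : ∃ c2, T.childOf c2 v0 ∧ c2 ≠ c := by
          obtain ⟨u, u', hneu, hu, hu', huv, hu'v⟩ := T.phylo v0 (fun hl => hleaf0 hl)
          by_cases h1 : u = c
          · exact ⟨u', ⟨hu', hu'v⟩, by rw [← h1]; exact hneu.symm⟩
          · exact ⟨u, ⟨hu, huv⟩, h1⟩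
        obtain ⟨z, hz2⟩ := cluster_nonempty (T := T) c2
        have hzC0 : z ∈ C0 := by
          rw [← hv0]
          exact cluster_mono (by rw [← hc2.1]; exact anc_parent c2) hz2
        have hznotc : z ∉ T.cluster c := by
          intro hzc
          have : z ∈ T.cluster c2 ∩ T.cluster c := ⟨hz2, hzc⟩
          rw [children_disjoint hc2 hc hc2ne] at this
          exact this
        have hznotD : z ∉ D := fun hzD => hznotc (hDc hzD)
        have heqm : mlab T t C0 = mlab T t C1 := by
          have h1 : δ x1 z = t v0 := delta_of_children hexp hc hc2 hc2ne.symm hx1c hz2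
          have h2 : δ x1 z = mlab T t C1 := by
            apply delta_eq_of_not_adj hx1C1 (hC0C1.1 hzC0)
              (fun hcon => hznotD (hcon ▸ hx1D))
            intro hadj
            exact hznotD (IsComp.closed ⟨x1, hx1C1, hDeq⟩ hx1D hadj)
          rw [mlab_eq hv0, ← h1, h2]
        refine ⟨{y : L | Reach δ C0 (mlab T t C0) x1 y}, ⟨x1, hx1C0, rfl⟩, ?_⟩
        intro y hy
        rw [hDeq] at hy
        have hy' := reach_restrict (C' := D) (fun z hz => by rw [hDeq]; exact hz) y hy
        show Reach δ C0 (mlab T t C0) x1 y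
        rw [heqm]
        exact Reach.mono (fun a b hab => adj_mono_set hss.1 hab) hy'

/-- Every non-top `DG`-set is a component of the graph on its parent. -/
theorem DG_parent_comp (hexp : T.ExplainsDelta t δ) {D : Set L} (hD : DG T t δ D)
    (hne : D ≠ Set.univ) :
    IsComp δ (parentSet {C : Set L | DG T t δ C} D)
      (mlab T t (parentSet {C : Set L | DG T t δ C} D)) D := by
  have hH : IsHierarchy {C : Set L | DG T t δ C} := Hdelta_isHierarchy hexp
  obtain ⟨hssub, hmem, hmin⟩ := parentSet_spec (H := {C : Set L | DG T t δ C}) hH.1 hne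
  obtain ⟨P, hP, hDP⟩ := DG_subset_comp hexp hD _ hmem hssub
  have hEnt : (parentSet {C : Set L | DG T t δ C} D).Nontrivial := by
    obtain ⟨x, hx⟩ := DG_nonempty hexp hD
    obtain ⟨z, hzP, hzD⟩ := Set.exists_of_ssubset hssub
    exact ⟨x, hssub.1 hx, z, hzP, fun hcon => hzD (hcon ▸ hx)⟩
  have hPD : P ⊂ parentSet {C : Set L | DG T t δ C} D :=
    DG_comp_proper hexp (DG_mem_clusters hexp hmem) hEnt hP
  have hDeqP : D = P := by
    by_contra hnp
    have hssDP : D ⊂ P := ⟨hDP, fun hPD' => hnp (Set.Subset.antisymm hDP hPD')⟩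
    have hPHd : DG T t δ P := DG.comp hmem hP
    have h1 := hmin P hPHd hssDP
    have h2 : P.ncard < (parentSet {C : Set L | DG T t δ C} D).ncard :=
      Set.ncard_lt_ncard hPD (Set.toFinite _)
    omega
  rwa [← hDeqP] at hP

/-- Minimal `DG`-set containing a given set. -/
noncomputable def minDG (T : PhyloTree L) (t : T.V → M) (δ : L → L → M) (C : Set L) :
    Set L :=
  if h : ∃ E, DG T t δ E ∧ C ⊆ E ∧ ∀ E', DG T t δ E' → C ⊆ E' → E.ncard ≤ E'.ncard
  then h.choose else Set.univ

theorem minDG_spec (hexp : T.ExplainsDelta t δ) {C : Set L} (hC : C.Nonempty) :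
    DG T t δ (minDG T t δ C) ∧ C ⊆ minDG T t δ C ∧
      ∀ E', DG T t δ E' → C ⊆ E' → minDG T t δ C ⊆ E' := by
  have hex : ∃ E, DG T t δ E ∧ C ⊆ E ∧
      ∀ E', DG T t δ E' → C ⊆ E' → E.ncard ≤ E'.ncard := by
    obtain ⟨E, hE, hmin⟩ := Set.exists_min_image {E : Set L | DG T t δ E ∧ C ⊆ E}
      Set.ncard (Set.toFinite _) ⟨Set.univ, DG.top, Set.subset_univ C⟩
    exact ⟨E, hE.1, hE.2, fun E' h1 h2 => hmin E' ⟨h1, h2⟩⟩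
  unfold minDG
  rw [dif_pos hex]
  obtain ⟨h1, h2, h3⟩ := hex.choose_spec
  refine ⟨h1, h2, ?_⟩
  intro E' hE' hCE'
  obtain ⟨x0, hx0⟩ := hC
  rcases clusters_nested (DG_mem_clusters hexp h1) (DG_mem_clusters hexp hE')
    with h | h | h
  · exact Set.inter_eq_left.1 h
  · have hsub := Set.inter_eq_right.1 h
    have hle := h3 E' hE' hCE'
    have heq := Set.eq_of_subset_of_ncard_le hsub hle (Set.toFinite _)
    rw [heq]
  · exfalso
    have : x0 ∈ hex.choose ∩ E' := ⟨h2 hx0, hCE' hx0⟩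
    rw [h] at this
    exact this

theorem minDG_self (hexp : T.ExplainsDelta t δ) {C : Set L} (hC : DG T t δ C) :
    minDG T t δ C = C := by
  obtain ⟨h1, h2, h3⟩ := minDG_spec hexp (DG_nonempty hexp hC)
  exact Set.Subset.antisymm (h3 C hC subset_rfl) h2

theorem key_delta (hexp : T.ExplainsDelta t δ) {x y : L} (hxy : x ≠ y) {W : Set L}
    (hW : DG T t δ W) (hxW : x ∈ W) (hyW : y ∈ W)
    (hmin : ∀ U, DG T t δ U → x ∈ U → y ∈ U → W ⊆ U) :
    mlab T t W = δ x y := by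
  set D := {z : L | Reach δ W (mlab T t W) x z} with hD
  have hcomp : IsComp δ W (mlab T t W) D := ⟨x, hxW, rfl⟩
  have hyD : y ∉ D := by
    intro hyD
    have hDG : DG T t δ D := DG.comp hW hcomp
    have hproper : D ⊂ W :=
      DG_comp_proper hexp (DG_mem_clusters hexp hW) ⟨x, hxW, y, hyW, hxy⟩ hcomp
    exact hproper.2 (hmin D hDG Relation.ReflTransGen.refl hyD)
  have hnadj : ¬ Adj δ W (mlab T t W) x y := by
    intro hadj
    exact hyD (Relation.ReflTransGen.single hadj)
  exact (delta_eq_of_not_adj hxW hyW hxy hnadj).symm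

theorem buildTree_explainsDelta {G : Set (Set L)} (hG : IsHierarchy G)
    (hsub : ∀ C, DG T t δ C → C ∈ G) (hexp : T.ExplainsDelta t δ) :
    (buildTree G hG).ExplainsDelta (fun v => mlab T t (minDG T t δ v.1)) δ := by
  intro x y hxy w hw
  rw [buildTree_isLCA] at hw
  obtain ⟨hxw, hyw, hmin⟩ := hw
  have hWne : (w.1).Nonempty := ⟨x, hxw⟩
  obtain ⟨h1, h2, h3⟩ := minDG_spec hexp hWne
  apply key_delta hexp hxy h1 (h2 hxw) (h2 hyw)
  intro U hU hxU hyU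
  exact h3 U hU (hmin U (hsub U hU) hxU hyU)

theorem buildTree_discriminating (hexp : T.ExplainsDelta t δ)
    (hH : IsHierarchy {C : Set L | DG T t δ C}) :
    (buildTree {C : Set L | DG T t δ C} hH).Discriminating
      (fun v => mlab T t (minDG T t δ v.1)) := by
  intro u hinner
  have hD : DG T t δ u.1 := u.2
  have hDne : u.1 ≠ Set.univ := by
    intro h
    apply hinner.1
    apply Subtype.ext
    rw [buildTree_parent_val, h, parentSet_univ]
  have hns : ∀ x : L, u.1 ≠ {x} := by
    intro x h
    exact hinner.2 ⟨x, Subtype.ext h.symm⟩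
  have hcomp := DG_parent_comp hexp hD hDne
  have hspec := parentSet_spec (H := {C : Set L | DG T t δ C}) hH.1 hDne
  have hEmem : DG T t δ (parentSet {C : Set L | DG T t δ C} u.1) := hspec.2.1
  have hnt : (u.1).Nontrivial := by
    obtain ⟨x, hx⟩ := DG_nonempty hexp hD
    by_contra hcon
    rw [Set.not_nontrivial_iff] at hcon
    exact hns x (Set.eq_singleton_iff_unique_mem.2 ⟨hx, fun y hy => hcon hy hx⟩)
  intro heq
  simp only [buildTree_parent_val] at heq
  rw [minDG_self hexp hD, minDG_self hexp hEmem] at heq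
  obtain ⟨x1, hx1E, hDeq⟩ := hcomp
  have hx1D : x1 ∈ u.1 := by rw [hDeq]; exact Relation.ReflTransGen.refl
  have hDD : IsComp δ u.1 (mlab T t u.1) u.1 := by
    refine ⟨x1, hx1D, ?_⟩
    apply Set.eq_of_subset_of_subset
    · intro y hy
      rw [hDeq] at hy
      have h2 := reach_restrict (C' := u.1) (fun z hz => by rw [hDeq]; exact hz) y hy
      show Reach δ u.1 (mlab T t u.1) x1 y
      rw [heq]
      exact h2
    · intro y hy
      exact Reach.mem_of_mem hx1D hy
  exact (DG_comp_proper hexp (DG_mem_clusters hexp hD) hnt hDD).2 subset_rfl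

end Delta

end PhyloTree


namespace PhyloTree

section Assembly

open scoped Classical

set_option linter.unusedSectionVars false

variable {L N : Type} [Fintype L]

theorem He_isHierarchy {T2 : PhyloTree L} {lam2 : T2.V → Finset N}
    {ε : L → L → Finset N} (h2 : T2.ExplainsEps lam2 ε) :
    IsHierarchy {C : Set L |
      C = Set.univ ∨ (∃ x : L, C = {x}) ∨ ∃ (k : N) (y : L), C = Sset ε k y} := by
  have hsub : ∀ C ∈ {C : Set L |
      C = Set.univ ∨ (∃ x : L, C = {x}) ∨ ∃ (k : N) (y : L), C = Sset ε k y},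
      C ∈ T2.clusters := by
    intro C hC
    rcases hC with h | ⟨x, h⟩ | ⟨k, y, h⟩
    · exact ⟨T2.root, by rw [cluster_root, h]⟩
    · exact ⟨T2.leaf x, by rw [cluster_leaf, h]⟩
    · obtain ⟨v, hv, _⟩ := Sset_cluster h2 k y
      exact ⟨v, by rw [hv, h]⟩
  refine ⟨Or.inl rfl, fun x => Or.inr (Or.inl ⟨x, rfl⟩), ?_, ?_⟩
  · intro A hA B hB
    exact clusters_nested (hsub A hA) (hsub B hB)
  · intro h
    obtain ⟨v, hv⟩ := hsub ∅ h
    obtain ⟨x, hx⟩ := cluster_nonempty v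
    rw [hv] at hx
    exact hx

end Assembly

end PhyloTree

/-- `(δ,ε)` is tree-like iff `δ` is a symbolic ultrametric,
`ε` is a Fitch map, and `H(T_δ) ∪ H(T_ε)` is a hierarchy, where `(T_δ,t_δ)` is
the discriminating least-resolved tree for `δ` and `(T_ε,λ_ε)` the
least-resolved tree for `ε`. -/
theorem statement9 {L M N : Type} (δ : L → L → M) (ε : L → L → Finset N) :
    PhyloTree.TreeLike δ ε ↔
      (PhyloTree.IsSymbolicUltrametric δ ∧ PhyloTree.IsFitchMap ε ∧
        ∀ (Tδ : PhyloTree L) (tδ : Tδ.V → M) (Tε : PhyloTree L)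
          (lamε : Tε.V → Finset N),
          Tδ.ExplainsDelta tδ δ → Tδ.Discriminating tδ →
          Tε.ExplainsEps lamε ε →
          (∀ (T : PhyloTree L) (lam : T.V → Finset N),
            T.ExplainsEps lam ε → PhyloTree.LeLabeled Tε lamε T lam) →
          IsHierarchy (Tδ.clusters ∪ Tε.clusters)) := by
  classical
  open PhyloTree in
  constructor
  · -- forward direction
    rintro ⟨T, t, lam, hexpd, hexpe⟩
    refine ⟨⟨T, t, hexpd⟩, ⟨T, lam, hexpe⟩, ?_⟩
    intro Tδ tδ Tε lamε h1 h2 h3 h4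
    have hsubδ : Tδ.clusters ⊆ T.clusters := disc_clusters_subset h1 h2 hexpd
    have hsubε : Tε.clusters ⊆ T.clusters := (h4 T lam hexpe).1
    have hmem : ∀ A ∈ Tδ.clusters ∪ Tε.clusters, A ∈ T.clusters := by
      intro A hA
      rcases hA with h | h
      · exact hsubδ h
      · exact hsubε h
    refine ⟨Or.inl ⟨Tδ.root, cluster_root⟩, fun x => Or.inl ⟨Tδ.leaf x, cluster_leaf x⟩,
      ?_, ?_⟩
    · intro A hA B hB
      exact clusters_nested (hmem A hA) (hmem B hB)
    · intro h
      obtain ⟨v, hv⟩ := hmem ∅ h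
      obtain ⟨x, hx⟩ := cluster_nonempty v
      rw [hv] at hx
      exact hx
  · -- backward direction
    rintro ⟨⟨T1, t1, h1⟩, ⟨T2, lam2, h2⟩, hyp⟩
    haveI : Finite L := finite_of_tree T1
    haveI : Fintype L := Fintype.ofFinite L
    have hHd : IsHierarchy {C : Set L | DG T1 t1 δ C} := Hdelta_isHierarchy h1
    have hHe : IsHierarchy {C : Set L |
        C = Set.univ ∨ (∃ x : L, C = {x}) ∨ ∃ (k : N) (y : L), C = Sset ε k y} :=
      He_isHierarchy h2
    have hexpds : (buildTree {C : Set L | DG T1 t1 δ C} hHd).ExplainsDelta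
        (fun v => mlab T1 t1 (minDG T1 t1 δ v.1)) δ :=
      buildTree_explainsDelta hHd (fun C hC => hC) h1
    have hdisc : (buildTree {C : Set L | DG T1 t1 δ C} hHd).Discriminating
        (fun v => mlab T1 t1 (minDG T1 t1 δ v.1)) :=
      buildTree_discriminating h1 hHd
    have hexpes : (buildTree {C : Set L |
        C = Set.univ ∨ (∃ x : L, C = {x}) ∨ ∃ (k : N) (y : L), C = Sset ε k y}
          hHe).ExplainsEps (fun v => lamS ε v.1) ε :=
      buildTree_explainsEps hHe (fun k y => Or.inr (Or.inr ⟨k, y, rfl⟩)) h2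
    have hleast : ∀ (T : PhyloTree L) (lam : T.V → Finset N), T.ExplainsEps lam ε →
        LeLabeled (buildTree {C : Set L |
          C = Set.univ ∨ (∃ x : L, C = {x}) ∨ ∃ (k : N) (y : L), C = Sset ε k y} hHe)
          (fun v => lamS ε v.1) T lam := by
      intro T lam hexp'
      constructor
      · rw [buildTree_clusters]
        intro C hC
        rcases hC with h | ⟨x, h⟩ | ⟨k, y, h⟩
        · exact ⟨T.root, by rw [cluster_root, h]⟩
        · exact ⟨T.leaf x, by rw [cluster_leaf, h]⟩
        · obtain ⟨v, hv, _⟩ := Sset_cluster hexp' k y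
          exact ⟨v, by rw [hv, h]⟩
      · intro v1 v2 hv1 hv2 hclust
        have hcl : T.cluster v2 = v1.1 := by
          rw [← hclust, buildTree_cluster]
        exact lamS_subset hexp' v2 hcl hv2
    have hhier := hyp _ _ _ _ hexpds hdisc hexpes hleast
    rw [buildTree_clusters, buildTree_clusters] at hhier
    refine ⟨buildTree _ hhier, fun v => mlab T1 t1 (minDG T1 t1 δ v.1),
      fun v => lamS ε v.1, ?_, ?_⟩
    · exact buildTree_explainsDelta hhier (fun C hC => Or.inl hC) h1
    · exact buildTree_explainsEps hhier
        (fun k y => Or.inr (Or.inr (Or.inr ⟨k, y, rfl⟩))) h2
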